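/- With Q_{n,r} as above and M_n = ⊕_{r≥n} Q_{n,r}, the Hilbert space ℓ²(V) of the binary tree decomposes as the orthogonal direct sum ℓ²(V) = ⊕_{n≥0} M_n, and each M_n is invariant under both Π and Π* (hence under L = Π + Π*). -/

import Mathlib

open scoped InnerProductSpace

noncomputable section

/-- ℓ²(V) for the binary tree V = List Bool (root [], children of v are b::v). -/
abbrev H2 := lp (fun _ : List Bool => ℂ) 2

/-- The subspace ℓ²(S_r) of functions supported on the sphere S_r = {v : |v| = r}. -/
def ellS (r : ℕ) : Submodule ℂ H2 where
  carrier := {φ | ∀ v : List Bool, v.length ≠ r → φ v = 0}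
  add_mem' := by
    intro a b ha hb v hv
    have : (↑(a + b) : ∀ _ : List Bool, ℂ) v = a v + b v := by
      rw [lp.coeFn_add]; rfl
    rw [this, ha v hv, hb v hv, add_zero]
  zero_mem' := by
    intro v hv
    have : (↑(0 : H2) : ∀ _ : List Bool, ℂ) v = 0 := by rw [lp.coeFn_zero]; rfl
    rw [this]
  smul_mem' := by
    intro c a ha v hv
    have : (↑(c • a) : ∀ _ : List Bool, ℂ) v = c • a v := by
      rw [lp.coeFn_smul]; rfl
    rw [this, ha v hv, smul_zero]

/-- The initial subspaces Q_{n,n}: Q_{0,0} = ℓ²(S_0), and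
Q_{n,n} = ℓ²(S_n) ⊖ (Q_{0,n} ⊕ ⋯ ⊕ Q_{n−1,n}), where Q_{m,n} = Π^{n−m} Q_{m,m}. -/
def Qnn (P : H2 →L[ℂ] H2) : ℕ → Submodule ℂ H2
  | n => ellS n ⊓ (⨆ m : Fin n, Submodule.map ((P ^ (n - (m : ℕ)) : H2 →L[ℂ] H2) : H2 →ₗ[ℂ] H2) (Qnn P m))ᗮ
  termination_by n => n
  decreasing_by exact m.isLt

/-- The subspaces Q_{n,r} = Π^{r−n} Q_{n,n} (for r ≥ n). -/
def Qs (P : H2 →L[ℂ] H2) (n r : ℕ) : Submodule ℂ H2 :=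
  Submodule.map ((P ^ (r - n) : H2 →L[ℂ] H2) : H2 →ₗ[ℂ] H2) (Qnn P n)


/-- The invariant subspaces M_n = ⊕_{r ≥ n} Q_{n,r}. -/
def Msub (P : H2 →L[ℂ] H2) (n : ℕ) : Submodule ℂ H2 :=
  ⨆ j : ℕ, Qs P n (n + j)

section Lemmas
variable {P : H2 →L[ℂ] H2}
  (hP : ∀ (φ : H2) (v : List Bool), P φ v = if v = [] then 0 else φ v.tail)

lemma mem_ellS {r : ℕ} {φ : H2} :
    φ ∈ ellS r ↔ ∀ v : List Bool, v.length ≠ r → φ v = 0 := Iff.rfl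

lemma Qnn_le_ellS (n : ℕ) : Qnn P n ≤ ellS n := by rw [Qnn]; exact inf_le_left

include hP in
lemma P_mem_ellS {k : ℕ} {φ : H2} (hφ : φ ∈ ellS k) : P φ ∈ ellS (k + 1) := by
  intro v hv
  rw [hP φ v]
  cases v with
  | nil => simp
  | cons b w =>
    rw [if_neg (List.cons_ne_nil b w)]
    exact hφ w (fun e => hv (by simp [e]))

include hP in
lemma Ppow_mem_ellS {k : ℕ} (j : ℕ) {φ : H2} (hφ : φ ∈ ellS k) :
    (P ^ j) φ ∈ ellS (k + j) := by
  induction j with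
  | zero => simpa using hφ
  | succ j ih =>
    have h1 : (P ^ (j + 1)) φ = P ((P ^ j) φ) := by
      rw [pow_succ']; rfl
    rw [h1]
    exact P_mem_ellS hP ih

include hP in
lemma Qs_le_ellS {n r : ℕ} (h : n ≤ r) : Qs P n r ≤ ellS r := by
  rintro _ ⟨φ, hφ, rfl⟩
  have := Ppow_mem_ellS hP (r - n) (Qnn_le_ellS n hφ)
  rwa [Nat.add_sub_cancel' h] at this

lemma ellS_orth {r s : ℕ} (hrs : r ≠ s) {φ ψ : H2} (hφ : φ ∈ ellS r) (hψ : ψ ∈ ellS s) :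
    ⟪φ, ψ⟫_ℂ = 0 := by
  rw [lp.inner_eq_tsum]
  convert tsum_zero with v
  rcases eq_or_ne v.length r with h | h
  · rw [hψ v (h ▸ hrs), inner_zero_right]
  · rw [hφ v h, inner_zero_left]

include hP in
lemma P_inner (φ ψ : H2) : ⟪P φ, P ψ⟫_ℂ = 2 * ⟪φ, ψ⟫_ℂ := by
  set g : Bool × List Bool → List Bool := fun p => p.1 :: p.2 with hgdef
  have hg : Function.Injective g := by
    rintro ⟨a, u⟩ ⟨b, w⟩ h
    simp only [hgdef, List.cons.injEq] at h
    exact Prod.ext h.1 h.2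
  set F : List Bool → ℂ := fun v => ⟪(P φ) v, (P ψ) v⟫_ℂ with hF
  have hsupp : Function.support F ⊆ Set.range g := by
    intro v hv
    cases v with
    | nil =>
      exfalso; apply hv
      simp [hF, hP φ]
    | cons b w => exact ⟨(b, w), rfl⟩
  have hFg : (F ∘ g) = fun p : Bool × List Bool => ⟪φ p.2, ψ p.2⟫_ℂ := by
    funext p
    simp only [Function.comp_apply, hF, hgdef, hP φ, hP ψ, if_neg (List.cons_ne_nil _ _)]
    rfl
  have hFsum : Summable F := lp.summable_inner (P φ) (P ψ)
  have h2 : Summable (fun p : Bool × List Bool => ⟪φ p.2, ψ p.2⟫_ℂ) := by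
    rw [← hFg]
    refine (hg.summable_iff ?_).mpr hFsum
    intro x hx
    by_contra h0
    exact hx (hsupp h0)
  calc ⟪P φ, P ψ⟫_ℂ = ∑' v, F v := lp.inner_eq_tsum _ _
    _ = ∑' p : Bool × List Bool, (F ∘ g) p := (hg.tsum_eq hsupp).symm
    _ = ∑' (b : Bool) (w : List Bool), ⟪φ w, ψ w⟫_ℂ := by
        rw [hFg]; exact Summable.tsum_prod' h2 (fun b => lp.summable_inner φ ψ)
    _ = 2 * ⟪φ, ψ⟫_ℂ := by
        rw [tsum_fintype, Fintype.sum_bool, lp.inner_eq_tsum]; ring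

include hP in
lemma Ppow_inner (t : ℕ) (φ ψ : H2) : ⟪(P ^ t) φ, (P ^ t) ψ⟫_ℂ = 2 ^ t * ⟪φ, ψ⟫_ℂ := by
  induction t with
  | zero => simp
  | succ t ih =>
    have h1 : ∀ x : H2, (P ^ (t + 1)) x = P ((P ^ t) x) := fun x => by rw [pow_succ']; rfl
    rw [h1, h1, P_inner hP, ih, pow_succ]; ring

lemma Qnn_inner_zero {m n : ℕ} (hmn : m < n) {a b : H2} (ha : a ∈ Qnn P m)
    (hb : b ∈ Qnn P n) : ⟪(P ^ (n - m)) a, b⟫_ℂ = 0 := by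
  rw [Qnn] at hb
  exact (Submodule.mem_orthogonal _ b).mp hb.2 _
    (Submodule.mem_iSup_of_mem (⟨m, hmn⟩ : Fin n) ⟨a, ha, rfl⟩)

include hP in
lemma Qs_orth_lt {m n j k : ℕ} (hmn : m < n) {x y : H2}
    (hx : x ∈ Qs P m (m + j)) (hy : y ∈ Qs P n (n + k)) : ⟪x, y⟫_ℂ = 0 := by
  rcases eq_or_ne (m + j) (n + k) with hrs | hrs
  · obtain ⟨a, ha, rfl⟩ := hx
    obtain ⟨b, hb, rfl⟩ := hy
    have hj : m + j - m = k + (n - m) := by omega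
    have hk : n + k - n = k := by omega
    rw [hj, hk, pow_add]
    have h1 : (P ^ k * P ^ (n - m)) a = (P ^ k) ((P ^ (n - m)) a) := rfl
    simp only [ContinuousLinearMap.coe_coe]
    rw [h1, Ppow_inner hP, Qnn_inner_zero hmn ha hb, mul_zero]
  · exact ellS_orth hrs (Qs_le_ellS hP (Nat.le_add_right m j) hx)
      (Qs_le_ellS hP (Nat.le_add_right n k) hy)

include hP in
lemma Qs_orth {m n j k : ℕ} (hmn : m ≠ n) {x y : H2}
    (hx : x ∈ Qs P m (m + j)) (hy : y ∈ Qs P n (n + k)) : ⟪x, y⟫_ℂ = 0 := by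
  rcases lt_or_gt_of_ne hmn with h | h
  · exact Qs_orth_lt hP h hx hy
  · rw [← inner_conj_symm, Qs_orth_lt hP h hy hx, map_zero]

instance fintypeSphere (r : ℕ) : Fintype {v : List Bool // v.length = r} :=
  inferInstanceAs (Fintype (List.Vector Bool r))

lemma ellS_finiteDimensional (r : ℕ) : FiniteDimensional ℂ (ellS r) := by
  let f : (ellS r) →ₗ[ℂ] ({v : List Bool // v.length = r} → ℂ) :=
    { toFun := fun φ v => (φ : H2) v.1
      map_add' := by intro a b; funext v; exact congrFun (lp.coeFn_add a.1 b.1) v.1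
      map_smul' := by intro c a; funext v; exact congrFun (lp.coeFn_smul c a.1) v.1 }
  refine FiniteDimensional.of_injective f ?_
  intro a b h
  apply Subtype.ext; apply lp.ext; funext v
  rcases eq_or_ne v.length r with hv | hv
  · exact congrFun h ⟨v, hv⟩
  · rw [a.2 v hv, b.2 v hv]

lemma Qs_self (n : ℕ) {x : H2} (hx : x ∈ Qnn P n) : x ∈ Qs P n n :=
  ⟨x, hx, by rw [Nat.sub_self, pow_zero]; rfl⟩

include hP in
lemma ellS_le_iSup_Qs (r : ℕ) : ellS r ≤ ⨆ m : Fin (r + 1), Qs P m r := by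
  intro x hx
  set T := ⨆ m : Fin r, Submodule.map ((P ^ (r - (m : ℕ)) : H2 →L[ℂ] H2) : H2 →ₗ[ℂ] H2) (Qnn P m) with hT
  have hTle : T ≤ ellS r :=
    iSup_le fun m => Qs_le_ellS hP (le_of_lt m.isLt)
  haveI : FiniteDimensional ℂ (ellS r) := ellS_finiteDimensional r
  haveI : FiniteDimensional ℂ T := Submodule.finiteDimensional_of_le hTle
  haveI : CompleteSpace T := FiniteDimensional.complete ℂ T
  obtain ⟨y, hy, z, hz, hxyz⟩ := T.exists_add_mem_mem_orthogonal x
  have hzr : z ∈ ellS r := by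
    have hzxy : z = x - y := by rw [hxyz]; abel
    rw [hzxy]; exact sub_mem hx (hTle hy)
  have hzQ : z ∈ Qnn P r := by rw [Qnn]; exact ⟨hzr, hz⟩
  rw [hxyz]
  refine add_mem ?_ (Submodule.mem_iSup_of_mem (⟨r, Nat.lt_succ_self r⟩ : Fin (r + 1))
    (Qs_self r hzQ))
  refine (iSup_le (fun m : Fin r => ?_) : T ≤ _) hy
  exact le_iSup (fun m : Fin (r + 1) => Qs P m r)
    (⟨m, lt_trans m.isLt (Nat.lt_succ_self r)⟩ : Fin (r + 1))

lemma P_Qs {m k : ℕ} (hmk : m ≤ k) {x : H2} (hx : x ∈ Qs P m k) : P x ∈ Qs P m (k + 1) := by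
  obtain ⟨a, ha, rfl⟩ := hx
  refine ⟨a, ha, ?_⟩
  have h1 : k + 1 - m = (k - m) + 1 := by omega
  rw [h1, pow_succ']; rfl

lemma single_mem_ellS (v : List Bool) : lp.single 2 v (1 : ℂ) ∈ ellS v.length := by
  intro w hw
  exact lp.single_apply_ne 2 v 1 (fun e => hw (by rw [e]))

lemma apply_eq_inner_single (f : H2) (v : List Bool) :
    f v = ⟪lp.single 2 v (1 : ℂ), f⟫_ℂ := by
  rw [lp.inner_single_left, RCLike.inner_apply, map_one, mul_one]

include hP in
lemma P_single (v : List Bool) :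
    P (lp.single 2 v (1 : ℂ)) =
      lp.single 2 (true :: v) 1 + lp.single 2 (false :: v) 1 := by
  apply lp.ext
  funext w
  rw [lp.coeFn_add, Pi.add_apply, hP]
  cases w with
  | nil =>
    rw [if_pos rfl,
      lp.single_apply_ne 2 _ _ (Ne.symm (List.cons_ne_nil true v)),
      lp.single_apply_ne 2 _ _ (Ne.symm (List.cons_ne_nil false v)), add_zero]
  | cons b u =>
    rw [if_neg (List.cons_ne_nil b u)]
    show lp.single 2 v 1 u = _
    rcases eq_or_ne u v with rfl | hu
    · cases b
      · rw [lp.single_apply_self,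
          lp.single_apply_ne 2 _ _ (by simp : (false :: u : List Bool) ≠ true :: u),
          lp.single_apply_self, zero_add]
      · rw [lp.single_apply_self, lp.single_apply_self,
          lp.single_apply_ne 2 _ _ (by simp : (true :: u : List Bool) ≠ false :: u), add_zero]
    · rw [lp.single_apply_ne 2 _ _ hu,
        lp.single_apply_ne 2 _ _ (by simp [hu] : (b :: u : List Bool) ≠ true :: v),
        lp.single_apply_ne 2 _ _ (by simp [hu] : (b :: u : List Bool) ≠ false :: v), add_zero]

include hP in
lemma adjoint_apply (ψ : H2) (v : List Bool) :
    (ContinuousLinearMap.adjoint P) ψ v = ψ (true :: v) + ψ (false :: v) := by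
  rw [apply_eq_inner_single, ContinuousLinearMap.adjoint_inner_right, P_single hP,
    inner_add_left, ← apply_eq_inner_single, ← apply_eq_inner_single]

include hP in
lemma adjP_P (φ : H2) : (ContinuousLinearMap.adjoint P) (P φ) = (2 : ℂ) • φ := by
  apply ext_inner_right ℂ
  intro v
  rw [ContinuousLinearMap.adjoint_inner_left, P_inner hP, inner_smul_left]
  congr 1
  exact (Complex.conj_ofNat 2).symm

include hP in
lemma adjP_Qnn {n : ℕ} {ψ : H2} (hψ : ψ ∈ Qnn P n) :
    (ContinuousLinearMap.adjoint P) ψ = 0 := by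
  cases n with
  | zero =>
    apply lp.ext; funext v
    have h0 : ψ ∈ ellS 0 := Qnn_le_ellS 0 hψ
    rw [adjoint_apply hP, h0 _ (by simp), h0 _ (by simp), add_zero, lp.coeFn_zero]
    rfl
  | succ k =>
    have hψe : ψ ∈ ellS (k + 1) := Qnn_le_ellS _ hψ
    have hadj : (ContinuousLinearMap.adjoint P) ψ ∈ ellS k := by
      intro v hv
      rw [adjoint_apply hP, hψe _ (by simp [hv]), hψe _ (by simp [hv]), add_zero]
    have hmem : (ContinuousLinearMap.adjoint P) ψ ∈ ⨆ m : Fin (k + 1), Qs P m k :=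
      ellS_le_iSup_Qs hP k hadj
    have hle : (⨆ m : Fin (k + 1), Qs P m k) ≤ Submodule.comap (P : H2 →ₗ[ℂ] H2)
        (⨆ m : Fin (k + 1), Submodule.map ((P ^ (k + 1 - (m : ℕ)) : H2 →L[ℂ] H2) : H2 →ₗ[ℂ] H2) (Qnn P m)) := by
      refine iSup_le fun m => fun x hx => Submodule.mem_comap.mpr ?_
      exact Submodule.mem_iSup_of_mem m (P_Qs (Nat.le_of_lt_succ m.isLt) hx)
    have hPmem : P ((ContinuousLinearMap.adjoint P) ψ) ∈
        ⨆ m : Fin (k + 1), Submodule.map ((P ^ (k + 1 - (m : ℕ)) : H2 →L[ℂ] H2) : H2 →ₗ[ℂ] H2) (Qnn P m) :=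
      Submodule.mem_comap.mp (hle hmem)
    rw [Qnn] at hψ
    have hz : ⟪P ((ContinuousLinearMap.adjoint P) ψ), ψ⟫_ℂ = 0 :=
      (Submodule.mem_orthogonal _ ψ).mp hψ.2 _ hPmem
    rw [← ContinuousLinearMap.adjoint_inner_right] at hz
    exact inner_self_eq_zero.mp hz

end Lemmas

/-- ℓ²(V) decomposes as the orthogonal direct sum ⊕_{n≥0} M_n,
and each M_n is invariant under Π and Π* (hence under L = Π + Π*). -/
theorem M_orthogonal_decomposition_and_invariance
    (P : H2 →L[ℂ] H2)
    (hP : ∀ (φ : H2) (v : List Bool),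
      P φ v = if v = [] then 0 else φ v.tail) :
    (∀ m n : ℕ, m ≠ n → ∀ φ ∈ Msub P m, ∀ ψ ∈ Msub P n, ⟪φ, ψ⟫_ℂ = 0) ∧
    (⨆ n : ℕ, Msub P n).topologicalClosure = ⊤ ∧
    (∀ n : ℕ, ∀ φ ∈ Msub P n,
      P φ ∈ Msub P n ∧ (ContinuousLinearMap.adjoint P) φ ∈ Msub P n) := by
  refine ⟨?_, ?_, ?_⟩
  · intro m n hmn φ hφ ψ hψ
    have key : Msub P m ≤ (Msub P n)ᗮ := by
      refine iSup_le fun j => ?_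
      have h1 : Msub P n ≤ (Qs P m (m + j))ᗮ := by
        refine iSup_le fun k => fun y hy => ?_
        exact (Submodule.mem_orthogonal _ y).mpr fun x hx => Qs_orth hP hmn hx hy
      exact le_trans (Submodule.le_orthogonal_orthogonal _) (Submodule.orthogonal_le h1)
    rw [← inner_conj_symm, (Submodule.mem_orthogonal _ φ).mp (key hφ) ψ hψ, map_zero]
  · rw [Submodule.topologicalClosure_eq_top_iff, Submodule.eq_bot_iff]
    intro ψ hψ
    apply lp.ext; funext v
    have hsingle : lp.single 2 v (1 : ℂ) ∈ ⨆ n, Msub P n := by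
      have h2 := ellS_le_iSup_Qs hP v.length (single_mem_ellS v)
      refine (iSup_le (fun m : Fin (v.length + 1) => ?_) :
        (⨆ m : Fin (v.length + 1), Qs P m v.length) ≤ ⨆ n, Msub P n) h2
      have hm : (m : ℕ) ≤ v.length := Nat.le_of_lt_succ m.isLt
      have he : Qs P m v.length = Qs P m ((m : ℕ) + (v.length - (m : ℕ))) := by
        rw [Nat.add_sub_cancel' hm]
      refine le_trans ?_ (le_iSup (fun n => Msub P n) (m : ℕ))
      rw [he]
      exact le_iSup (fun jj => Qs P (m : ℕ) ((m : ℕ) + jj)) (v.length - (m : ℕ))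
    have h0 : ψ v = 0 := by
      rw [apply_eq_inner_single, (Submodule.mem_orthogonal _ ψ).mp hψ _ hsingle]
    rw [h0, lp.coeFn_zero]
    rfl
  · intro n φ hφ
    constructor
    · have hle : Msub P n ≤ Submodule.comap (P : H2 →ₗ[ℂ] H2) (Msub P n) := by
        refine iSup_le fun j => fun x hx => Submodule.mem_comap.mpr ?_
        exact Submodule.mem_iSup_of_mem (j + 1) (P_Qs (Nat.le_add_right n j) hx)
      exact Submodule.mem_comap.mp (hle hφ)
    · have hle : Msub P n ≤
          Submodule.comap ((ContinuousLinearMap.adjoint P : H2 →L[ℂ] H2) : H2 →ₗ[ℂ] H2) (Msub P n) := by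
        refine iSup_le fun j => fun x hx => Submodule.mem_comap.mpr ?_
        obtain ⟨a, ha, rfl⟩ := hx
        cases j with
        | zero =>
          have h1 : (P ^ (n + 0 - n)) a = a := by
            have h2 : n + 0 - n = 0 := by omega
            rw [h2, pow_zero]; rfl
          simp only [ContinuousLinearMap.coe_coe]
          rw [h1, adjP_Qnn hP ha]
          exact zero_mem _
        | succ j =>
          have h1 : (P ^ (n + (j + 1) - n)) a = P ((P ^ j) a) := by
            have h2 : n + (j + 1) - n = j + 1 := by omega
            rw [h2, pow_succ']; rfl
          simp only [ContinuousLinearMap.coe_coe]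
          rw [h1, adjP_P hP]
          refine Submodule.smul_mem _ _ ?_
          refine Submodule.mem_iSup_of_mem j ⟨a, ha, ?_⟩
          have h3 : n + j - n = j := by omega
          rw [h3]
          rfl
      exact Submodule.mem_comap.mp (hle hφ)

end
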